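/- Let T be a pq-tree over a finite set U with weights w : U → ℤ, and let v be a p-node of T with children c_1, …, c_ℓ where ℓ ≥ 2. For a node c define g(c) = border(c) − max(total(c), 0), and let b_1 ≥ b_2 be the two largest values among g(c_1), …, g(c_ℓ) (attained at two distinct children). Then inner(v) = max(x, y), where x = max_{1 ≤ i ≤ ℓ} inner(c_i) and y = max(b_1, 0) + max(b_2, 0) + Σ_{i=1}^{ℓ} max(total(c_i), 0). -/

import Mathlib

/-- A pq-tree: leaves carry elements of `U`; the children of each internal node
(a p-node or a q-node) are given as a sequence. -/
inductive PQTree (U : Type) : Type where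
  | leaf : U → PQTree U
  | pnode : List (PQTree U) → PQTree U
  | qnode : List (PQTree U) → PQTree U

namespace PQTree

variable {U : Type}

/-- The list of leaves below a node, read left to right in the given order. -/
def leaves : PQTree U → List U
  | leaf u => [u]
  | pnode cs => cs.attach.flatMap (fun c => leaves c.1)
  | qnode cs => cs.attach.flatMap (fun c => leaves c.1)
  decreasing_by
  · have := List.sizeOf_lt_of_mem c.2; simp; omega
  · have := List.sizeOf_lt_of_mem c.2; simp; omega

/-- `total(v) = Σ_{u ∈ leaves(v)} w(u)`. -/
def total (w : U → ℤ) (t : PQTree U) : ℤ :=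
  ((leaves t).map w).sum

/-- `IsFrontier t l` holds when `l` is a frontier order of the pq-tree `t`: a linear order
of its leaves obtained by reading the leaves left to right after independently permuting
the children sequence of each p-node arbitrarily and either keeping or reversing the
children sequence of each q-node. -/
inductive IsFrontier : PQTree U → List U → Prop where
  | leaf (u : U) : IsFrontier (leaf u) [u]
  | pnode (cs cs' : List (PQTree U)) (fs : List (List U)) :
      cs'.Perm cs → List.Forall₂ IsFrontier cs' fs →
      IsFrontier (pnode cs) fs.flatten
  | qnodeKeep (cs : List (PQTree U)) (fs : List (List U)) :
      List.Forall₂ IsFrontier cs fs →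
      IsFrontier (qnode cs) fs.flatten
  | qnodeRev (cs : List (PQTree U)) (fs : List (List U)) :
      List.Forall₂ IsFrontier cs.reverse fs →
      IsFrontier (qnode cs) fs.flatten

variable [DecidableEq U]

/-- `S` is compatible with the pq-tree `t`: some frontier order of `t` has a contiguous
segment whose elements are exactly `S` (in particular `S = ∅` is compatible). -/
def Compatible (S : Finset U) (t : PQTree U) : Prop :=
  ∃ l l₁ l₂ l₃ : List U, IsFrontier t l ∧ l = l₁ ++ l₂ ++ l₃ ∧ l₂.toFinset = S

/-- `S` is border-compatible with the pq-tree `t`: `S` is nonempty and in some frontier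
order of `t` the elements of `S` occupy a set of consecutive positions containing the
first or the last position, i.e. `S` is a prefix or a suffix of the frontier. -/
def BorderCompatible (S : Finset U) (t : PQTree U) : Prop :=
  S.Nonempty ∧ ∃ l l₁ l₂ : List U, IsFrontier t l ∧ l = l₁ ++ l₂ ∧
    (l₁.toFinset = S ∨ l₂.toFinset = S)

/-- `inner(v)`: the maximum of `Σ_{u∈S} w(u)` over all sets `S` compatible with the
subtree at `v` (including `S = ∅`, so `inner(v) ≥ 0`). -/
noncomputable def inner (w : U → ℤ) (t : PQTree U) : ℤ :=
  sSup {z : ℤ | ∃ S : Finset U, Compatible S t ∧ z = ∑ u ∈ S, w u}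

/-- `border(v)`: the maximum of `Σ_{u∈S} w(u)` over all (nonempty) sets `S`
border-compatible with the subtree at `v`. -/
noncomputable def border (w : U → ℤ) (t : PQTree U) : ℤ :=
  sSup {z : ℤ | ∃ S : Finset U, BorderCompatible S t ∧ z = ∑ u ∈ S, w u}

/-- A well-formed pq-tree: every internal node has a nonempty sequence of children
(so every subtree has at least one leaf). -/
inductive Proper : PQTree U → Prop where
  | leaf (u : U) : Proper (leaf u)
  | pnode (cs : List (PQTree U)) : cs ≠ [] → (∀ c ∈ cs, Proper c) → Proper (pnode cs)
  | qnode (cs : List (PQTree U)) : cs ≠ [] → (∀ c ∈ cs, Proper c) → Proper (qnode cs)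



/-! ### Infrastructure -/

open List

theorem leaves_pnode (cs : List (PQTree U)) :
    leaves (pnode cs) = (cs.map leaves).flatten := by
  rw [leaves]; simp [List.flatMap_def, List.attach_map_val]

theorem leaves_qnode (cs : List (PQTree U)) :
    leaves (qnode cs) = (cs.map leaves).flatten := by
  rw [leaves]; simp [List.flatMap_def, List.attach_map_val]

theorem flatten_perm_of_forall₂ {α : Type*} {fs gs : List (List α)}
    (h : List.Forall₂ (fun a b => a.Perm b) fs gs) : fs.flatten.Perm gs.flatten := by
  induction h with
  | nil => simp
  | cons h _ ih => simpa using h.append ih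

theorem isFrontier_leaves (t : PQTree U) : IsFrontier t (leaves t) := by
  cases t with
  | leaf u => simp only [leaves]; exact .leaf u
  | pnode cs =>
    rw [leaves_pnode]
    refine .pnode cs cs (cs.map leaves) (Perm.refl _) ?_
    rw [List.forall₂_map_right_iff]
    refine List.forall₂_same.2 (fun x hx => ?_)
    have : sizeOf x < sizeOf (pnode cs) := by
      have := List.sizeOf_lt_of_mem hx; simp; omega
    exact isFrontier_leaves x
  | qnode cs =>
    rw [leaves_qnode]
    refine .qnodeKeep cs (cs.map leaves) ?_
    rw [List.forall₂_map_right_iff]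
    refine List.forall₂_same.2 (fun x hx => ?_)
    have : sizeOf x < sizeOf (qnode cs) := by
      have := List.sizeOf_lt_of_mem hx; simp; omega
    exact isFrontier_leaves x
termination_by sizeOf t

theorem perm_leaves : ∀ (t : PQTree U) (l : List U), IsFrontier t l → l.Perm (leaves t) := by
  intro t l h
  cases h with
  | leaf u => simp only [leaves]; exact Perm.refl _
  | pnode cs cs' fs hperm hf =>
    have key : ∀ (cs₀ : List (PQTree U)) (fs₀ : List (List U)), (∀ x ∈ cs₀, x ∈ cs') →
        List.Forall₂ IsFrontier cs₀ fs₀ →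
        List.Forall₂ (fun a b => a.Perm b) fs₀ (cs₀.map leaves) := by
      intro cs₀ fs₀ hsub h0
      induction h0 with
      | nil => exact .nil
      | @cons a b l1 l2 h1 h2 ih =>
        have hs : sizeOf a < 1 + sizeOf cs := by
          have ha : a ∈ cs := hperm.mem_iff.1 (hsub a List.mem_cons_self)
          have := List.sizeOf_lt_of_mem ha; omega
        exact .cons (perm_leaves a b h1) (ih (fun x hx => hsub x (List.mem_cons_of_mem a hx)))
    have h1 : fs.flatten.Perm (cs'.map leaves).flatten :=
      flatten_perm_of_forall₂ (key cs' fs (fun _ hx => hx) hf)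
    have h2 : (cs'.map leaves).flatten.Perm (cs.map leaves).flatten :=
      (hperm.map leaves).flatten
    rw [leaves_pnode]
    exact h1.trans h2
  | qnodeKeep cs fs hf =>
    have key : ∀ (cs₀ : List (PQTree U)) (fs₀ : List (List U)), (∀ x ∈ cs₀, x ∈ cs) →
        List.Forall₂ IsFrontier cs₀ fs₀ →
        List.Forall₂ (fun a b => a.Perm b) fs₀ (cs₀.map leaves) := by
      intro cs₀ fs₀ hsub h0
      induction h0 with
      | nil => exact .nil
      | @cons a b l1 l2 h1 h2 ih =>
        have hs : sizeOf a < 1 + sizeOf cs := by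
          have := List.sizeOf_lt_of_mem (hsub a List.mem_cons_self); omega
        exact .cons (perm_leaves a b h1) (ih (fun x hx => hsub x (List.mem_cons_of_mem a hx)))
    rw [leaves_qnode]
    exact flatten_perm_of_forall₂ (key cs fs (fun _ hx => hx) hf)
  | qnodeRev cs fs hf =>
    have key : ∀ (cs₀ : List (PQTree U)) (fs₀ : List (List U)), (∀ x ∈ cs₀, x ∈ cs) →
        List.Forall₂ IsFrontier cs₀ fs₀ →
        List.Forall₂ (fun a b => a.Perm b) fs₀ (cs₀.map leaves) := by
      intro cs₀ fs₀ hsub h0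
      induction h0 with
      | nil => exact .nil
      | @cons a b l1 l2 h1 h2 ih =>
        have hs : sizeOf a < 1 + sizeOf cs := by
          have := List.sizeOf_lt_of_mem (hsub a List.mem_cons_self); omega
        exact .cons (perm_leaves a b h1) (ih (fun x hx => hsub x (List.mem_cons_of_mem a hx)))
    have h1 : fs.flatten.Perm (cs.reverse.map leaves).flatten :=
      flatten_perm_of_forall₂ (key cs.reverse fs (fun _ hx => by simpa using List.mem_reverse.1 hx) hf)
    have h2 : (cs.reverse.map leaves).flatten.Perm (cs.map leaves).flatten :=
      ((cs.reverse_perm).map leaves).flatten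
    rw [leaves_qnode]
    exact h1.trans h2
termination_by t => sizeOf t
decreasing_by all_goals (simp_wf; assumption)



theorem isFrontier_reverse : ∀ (t : PQTree U) (l : List U), IsFrontier t l →
    IsFrontier t l.reverse := by
  intro t l h
  cases h with
  | leaf u => exact .leaf u
  | pnode cs cs' fs hperm hf =>
    have key : ∀ (cs₀ : List (PQTree U)) (fs₀ : List (List U)), (∀ x ∈ cs₀, x ∈ cs) →
        List.Forall₂ IsFrontier cs₀ fs₀ →
        List.Forall₂ (fun t f => IsFrontier t (List.reverse f)) cs₀ fs₀ := by
      intro cs₀ fs₀ hsub h0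
      induction h0 with
      | nil => exact .nil
      | @cons a b l1 l2 h1 h2 ih =>
        have hs : sizeOf a < 1 + sizeOf cs := by
          have := List.sizeOf_lt_of_mem (hsub a List.mem_cons_self); omega
        exact .cons (isFrontier_reverse a b h1) (ih (fun x hx => hsub x (List.mem_cons_of_mem a hx)))
    have h2 : List.Forall₂ IsFrontier cs'.reverse ((fs.map List.reverse).reverse) := by
      rw [List.forall₂_reverse_iff, List.forall₂_map_right_iff]
      exact key cs' fs (fun x hx => hperm.mem_iff.1 hx) hf
    rw [List.reverse_flatten]
    exact .pnode cs cs'.reverse _ (cs'.reverse_perm.trans hperm) h2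
  | qnodeKeep cs fs hf =>
    have key : ∀ (cs₀ : List (PQTree U)) (fs₀ : List (List U)), (∀ x ∈ cs₀, x ∈ cs) →
        List.Forall₂ IsFrontier cs₀ fs₀ →
        List.Forall₂ (fun t f => IsFrontier t (List.reverse f)) cs₀ fs₀ := by
      intro cs₀ fs₀ hsub h0
      induction h0 with
      | nil => exact .nil
      | @cons a b l1 l2 h1 h2 ih =>
        have hs : sizeOf a < 1 + sizeOf cs := by
          have := List.sizeOf_lt_of_mem (hsub a List.mem_cons_self); omega
        exact .cons (isFrontier_reverse a b h1) (ih (fun x hx => hsub x (List.mem_cons_of_mem a hx)))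
    have h2 : List.Forall₂ IsFrontier cs.reverse ((fs.map List.reverse).reverse) := by
      rw [List.forall₂_reverse_iff, List.forall₂_map_right_iff]
      exact key cs fs (fun _ hx => hx) hf
    rw [List.reverse_flatten]
    exact .qnodeRev cs _ h2
  | qnodeRev cs fs hf =>
    have key : ∀ (cs₀ : List (PQTree U)) (fs₀ : List (List U)), (∀ x ∈ cs₀, x ∈ cs) →
        List.Forall₂ IsFrontier cs₀ fs₀ →
        List.Forall₂ (fun t f => IsFrontier t (List.reverse f)) cs₀ fs₀ := by
      intro cs₀ fs₀ hsub h0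
      induction h0 with
      | nil => exact .nil
      | @cons a b l1 l2 h1 h2 ih =>
        have hs : sizeOf a < 1 + sizeOf cs := by
          have := List.sizeOf_lt_of_mem (hsub a List.mem_cons_self); omega
        exact .cons (isFrontier_reverse a b h1) (ih (fun x hx => hsub x (List.mem_cons_of_mem a hx)))
    have h2 : List.Forall₂ IsFrontier cs ((fs.map List.reverse).reverse) := by
      have h3 : List.Forall₂ IsFrontier cs.reverse (fs.map List.reverse) :=
        List.forall₂_map_right_iff.2 (key cs.reverse fs (fun x hx => List.mem_reverse.1 hx) hf)
      have h4 := List.forall₂_reverse_iff.2 h3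
      rwa [List.reverse_reverse] at h4
    rw [List.reverse_flatten]
    exact .qnodeKeep cs _ h2
termination_by t => sizeOf t
decreasing_by all_goals (simp_wf; assumption)


theorem compatible_empty (t : PQTree U) : Compatible (∅ : Finset U) t :=
  ⟨leaves t, leaves t, [], [], isFrontier_leaves t, by simp, by simp⟩

theorem Compatible.subset {S : Finset U} {t : PQTree U} (h : Compatible S t) :
    S ⊆ (leaves t).toFinset := by
  obtain ⟨l, l₁, l₂, l₃, hf, hl, hS⟩ := h
  intro u hu
  rw [← hS] at hu
  have : u ∈ l := by subst hl; simp at hu ⊢; tauto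
  simpa using (perm_leaves t l hf).mem_iff.1 this

theorem BorderCompatible.subset {S : Finset U} {t : PQTree U} (h : BorderCompatible S t) :
    S ⊆ (leaves t).toFinset := by
  obtain ⟨-, l, l₁, l₂, hf, hl, hS⟩ := h
  intro u hu
  have : u ∈ l := by
    subst hl; rcases hS with h | h <;> rw [← h] at hu <;> simp at hu ⊢ <;> tauto
  simpa using (perm_leaves t l hf).mem_iff.1 this

theorem setOf_sum_finite {P : Finset U → Prop} {t : PQTree U}
    (hP : ∀ S, P S → S ⊆ (leaves t).toFinset) (w : U → ℤ) :
    {z : ℤ | ∃ S : Finset U, P S ∧ z = ∑ u ∈ S, w u}.Finite := by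
  have : {z : ℤ | ∃ S : Finset U, P S ∧ z = ∑ u ∈ S, w u} ⊆
      (fun S : Finset U => ∑ u ∈ S, w u) '' ((leaves t).toFinset.powerset : Finset (Finset U)) := by
    rintro z ⟨S, hS, rfl⟩
    exact ⟨S, Finset.mem_coe.2 (Finset.mem_powerset.2 (hP S hS)), rfl⟩
  exact Set.Finite.subset (Set.Finite.image _ (Finset.finite_toSet _)) this

theorem le_inner {S : Finset U} {t : PQTree U} (w : U → ℤ) (h : Compatible S t) :
    (∑ u ∈ S, w u) ≤ inner w t :=
  le_csSup (Set.Finite.bddAbove (setOf_sum_finite (fun _ h => h.subset) w)) ⟨S, h, rfl⟩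

theorem inner_le {t : PQTree U} {M : ℤ} (w : U → ℤ)
    (h : ∀ S : Finset U, Compatible S t → (∑ u ∈ S, w u) ≤ M) : inner w t ≤ M :=
  csSup_le (Set.nonempty_of_mem (show (0:ℤ) ∈ {z : ℤ | ∃ S : Finset U, Compatible S t ∧ z = ∑ u ∈ S, w u} from ⟨∅, compatible_empty t, by simp⟩)) (by rintro z ⟨S, hS, rfl⟩; exact h S hS)

theorem inner_nonneg (w : U → ℤ) (t : PQTree U) : 0 ≤ inner w t := by
  have := le_inner w (compatible_empty t)
  simpa using this

theorem inner_attained (w : U → ℤ) (t : PQTree U) :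
    ∃ S : Finset U, Compatible S t ∧ inner w t = ∑ u ∈ S, w u :=
  Set.Nonempty.csSup_mem (Set.nonempty_of_mem (show (0:ℤ) ∈ {z : ℤ | ∃ S : Finset U, Compatible S t ∧ z = ∑ u ∈ S, w u} from ⟨∅, compatible_empty t, by simp⟩))
    (setOf_sum_finite (fun _ h => h.subset) w)

theorem le_border {S : Finset U} {t : PQTree U} (w : U → ℤ) (h : BorderCompatible S t) :
    (∑ u ∈ S, w u) ≤ border w t :=
  le_csSup (Set.Finite.bddAbove (setOf_sum_finite (fun _ h => h.subset) w)) ⟨S, h, rfl⟩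

theorem leaves_ne_nil {t : PQTree U} (h : Proper t) : leaves t ≠ [] := by
  induction h with
  | leaf u => simp [leaves]
  | @pnode cs hne hall ih =>
    rw [leaves_pnode]
    intro hc
    rw [List.flatten_eq_nil_iff] at hc
    obtain ⟨c, hc'⟩ := List.exists_mem_of_ne_nil cs hne
    exact ih c hc' (hc (leaves c) (List.mem_map_of_mem (f := leaves) hc'))
  | @qnode cs hne hall ih =>
    rw [leaves_qnode]
    intro hc
    rw [List.flatten_eq_nil_iff] at hc
    obtain ⟨c, hc'⟩ := List.exists_mem_of_ne_nil cs hne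
    exact ih c hc' (hc (leaves c) (List.mem_map_of_mem (f := leaves) hc'))

theorem border_attained (w : U → ℤ) {t : PQTree U} (h : Proper t) :
    ∃ S : Finset U, BorderCompatible S t ∧ border w t = ∑ u ∈ S, w u := by
  refine Set.Nonempty.csSup_mem ?_ (setOf_sum_finite (fun _ h => h.subset) w)
  obtain ⟨u, r, hur⟩ : ∃ u r, leaves t = u :: r := by
    cases hl : leaves t with
    | nil => exact absurd hl (leaves_ne_nil h)
    | cons a r => exact ⟨a, r, rfl⟩
  refine ⟨∑ x ∈ ({u} : Finset U), w x, {u}, ⟨⟨u, by simp⟩, leaves t, [u], r, isFrontier_leaves t, hur, Or.inl (by simp)⟩, rfl⟩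

/-- Border-compatible sets can be realized as a suffix. -/
theorem BorderCompatible.suffix {S : Finset U} {t : PQTree U} (h : BorderCompatible S t) :
    ∃ l₁ l₂ : List U, IsFrontier t (l₁ ++ l₂) ∧ l₂.toFinset = S := by
  obtain ⟨-, l, l₁, l₂, hf, rfl, hS⟩ := h
  rcases hS with hS | hS
  · refine ⟨l₂.reverse, l₁.reverse, ?_, by simpa using hS⟩
    have := isFrontier_reverse t _ hf
    simpa using this
  · exact ⟨l₁, l₂, hf, hS⟩

/-- Border-compatible sets can be realized as a prefix. -/
theorem BorderCompatible.prefix {S : Finset U} {t : PQTree U} (h : BorderCompatible S t) :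
    ∃ l₁ l₂ : List U, IsFrontier t (l₁ ++ l₂) ∧ l₁.toFinset = S := by
  obtain ⟨-, l, l₁, l₂, hf, rfl, hS⟩ := h
  rcases hS with hS | hS
  · exact ⟨l₁, l₂, hf, hS⟩
  · refine ⟨l₂.reverse, l₁.reverse, ?_, by simpa using hS⟩
    have := isFrontier_reverse t _ hf
    simpa using this

theorem frontier_sum (w : U → ℤ) {t : PQTree U} {l : List U} (h : IsFrontier t l) :
    (l.map w).sum = total w t :=
  ((perm_leaves t l h).map w).sum_eq

theorem suffix_sum_le (w : U → ℤ) {t : PQTree U} {l₁ l₂ : List U}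
    (h : IsFrontier t (l₁ ++ l₂)) (hnd : l₂.Nodup) :
    (l₂.map w).sum ≤ max (border w t) 0 := by
  rcases eq_or_ne l₂ [] with rfl | hne
  · simp
  · have hbc : BorderCompatible l₂.toFinset t :=
      ⟨by rwa [List.toFinset_nonempty_iff], l₁ ++ l₂, l₁, l₂, h, rfl, Or.inr rfl⟩
    have := le_border w hbc
    rw [List.sum_toFinset w hnd] at this
    exact this.trans (le_max_left _ _)

theorem prefix_sum_le (w : U → ℤ) {t : PQTree U} {l₁ l₂ : List U}
    (h : IsFrontier t (l₁ ++ l₂)) (hnd : l₁.Nodup) :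
    (l₁.map w).sum ≤ max (border w t) 0 := by
  rcases eq_or_ne l₁ [] with rfl | hne
  · simp
  · have hbc : BorderCompatible l₁.toFinset t :=
      ⟨by rwa [List.toFinset_nonempty_iff], l₁ ++ l₂, l₁, l₂, h, rfl, Or.inl rfl⟩
    have := le_border w hbc
    rw [List.sum_toFinset w hnd] at this
    exact this.trans (le_max_left _ _)


theorem flatten_eq_append {α : Type*} : ∀ {fs : List (List α)} {p q : List α},
    fs.flatten = p ++ q →
    (fs = [] ∧ p = [] ∧ q = []) ∨
    ∃ (fa : List (List α)) (y : List α) (fb : List (List α)) (y₁ y₂ : List α),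
      fs = fa ++ y :: fb ∧ y = y₁ ++ y₂ ∧ p = fa.flatten ++ y₁ ∧ q = y₂ ++ fb.flatten := by
  intro fs
  induction fs with
  | nil =>
    intro p q h
    simp only [List.flatten_nil] at h
    obtain ⟨rfl, rfl⟩ := List.append_eq_nil_iff.1 h.symm
    exact Or.inl ⟨rfl, rfl, rfl⟩
  | cons x fs ih =>
    intro p q h
    simp only [List.flatten_cons] at h
    rcases List.append_eq_append_iff.1 h with ⟨a', rfl, ha⟩ | ⟨c', hx, rfl⟩
    · rcases ih ha with ⟨rfl, rfl, rfl⟩ | ⟨fa, y, fb, y₁, y₂, rfl, rfl, rfl, rfl⟩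
      · exact Or.inr ⟨[], x, [], x, [], by simp, by simp, by simp, by simp⟩
      · exact Or.inr ⟨x :: fa, y₁ ++ y₂, fb, y₁, y₂, rfl, rfl, by simp, rfl⟩
    · subst hx
      exact Or.inr ⟨[], p ++ c', fs, p, c', rfl, rfl, by simp, rfl⟩

theorem flatten_eq_append₃ {α : Type*} {fs : List (List α)} {l₁ l₂ l₃ : List α}
    (h : fs.flatten = l₁ ++ l₂ ++ l₃) :
    l₂ = [] ∨
    (∃ (fa fb : List (List α)) (x x₁ x₂ x₃ : List α),
      fs = fa ++ x :: fb ∧ x = x₁ ++ x₂ ++ x₃ ∧ l₂ = x₂) ∨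
    (∃ (fa fm fb : List (List α)) (x y x₁ x₂ y₁ y₂ : List α),
      fs = fa ++ x :: (fm ++ y :: fb) ∧ x = x₁ ++ x₂ ∧ y = y₁ ++ y₂ ∧
      l₂ = x₂ ++ fm.flatten ++ y₁) := by
  rw [List.append_assoc] at h
  rcases flatten_eq_append h with ⟨rfl, rfl, h23⟩ | ⟨fa, y, fb, y₁, y₂, rfl, rfl, rfl, h23⟩
  · obtain ⟨rfl, -⟩ := List.append_eq_nil_iff.1 h23
    exact Or.inl rfl
  · rcases List.append_eq_append_iff.1 h23 with ⟨a', rfl, rfl⟩ | ⟨c', rfl, hc⟩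
    · exact Or.inr (Or.inl ⟨fa, fb, y₁ ++ (l₂ ++ a'), y₁, l₂, a', rfl, by simp, rfl⟩)
    · rcases flatten_eq_append hc with ⟨rfl, rfl, rfl⟩ |
        ⟨fm, z, fc, z₁, z₂, rfl, rfl, rfl, rfl⟩
      · exact Or.inr (Or.inl ⟨fa, [], y₁ ++ y₂, y₁, y₂ ++ [], [], rfl, by simp, rfl⟩)
      · exact Or.inr (Or.inr ⟨fa, fm, fc, y₁ ++ y₂, z₁ ++ z₂, y₁, y₂, z₁, z₂, rfl, rfl, rfl,
          by simp⟩)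

theorem forall₂_append_cons {α β : Type*} {R : α → β → Prop} :
    ∀ {b₁ : List β} {as : List α} {b : β} {b₂ : List β},
    List.Forall₂ R as (b₁ ++ b :: b₂) →
    ∃ a₁ a a₂, as = a₁ ++ a :: a₂ ∧ List.Forall₂ R a₁ b₁ ∧ R a b ∧ List.Forall₂ R a₂ b₂ := by
  intro b₁
  induction b₁ with
  | nil =>
    intro as b b₂ h
    obtain ⟨a, u', hab, hu, rfl⟩ := List.forall₂_cons_right_iff.1 h
    exact ⟨[], a, u', rfl, .nil, hab, hu⟩
  | cons bh bt ih =>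
    intro as b b₂ h
    obtain ⟨a0, u', hab0, hu, rfl⟩ := List.forall₂_cons_right_iff.1 h
    obtain ⟨a₁, a, a₂, rfl, h₁, h₂, h₃⟩ := ih hu
    exact ⟨a0 :: a₁, a, a₂, rfl, .cons hab0 h₁, h₂, h₃⟩

theorem injective_of_nodup_leaves {ℓ : ℕ} (c : Fin ℓ → PQTree U)
    (hp : ∀ i, Proper (c i))
    (hnd : (leaves (pnode (List.ofFn c))).Nodup) : Function.Injective c := by
  rw [leaves_pnode, List.map_ofFn] at hnd
  have hpair := (List.nodup_flatten.1 hnd).2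
  rw [List.pairwise_ofFn] at hpair
  intro i j hij
  by_contra hne
  obtain ⟨u, hu⟩ : ∃ u, u ∈ leaves (c i) := by
    cases hl : leaves (c i) with
    | nil => exact absurd hl (leaves_ne_nil (hp i))
    | cons a r => exact ⟨a, by simp [hl]⟩
  rcases lt_or_gt_of_ne hne with h | h
  · exact hpair h hu (by simpa [Function.comp, ← hij] using hu)
  · exact hpair h (by simpa [Function.comp, hij] using hu) hu


theorem arith_bound {b₁ b₂ A B C Sca Scm Scb Ba Bb Ta Tb : ℤ}
    (hb : b₂ ≤ b₁) (hA : A ≤ max Ba 0) (hC : C ≤ max Bb 0) (hB : B ≤ Scm)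
    (h1 : 0 ≤ Sca) (h2 : 0 ≤ Scb) (h3 : 0 ≤ Ta) (h4 : 0 ≤ Tb)
    (h5 : Ba - Ta ≤ b₁) (h6 : Bb - Tb ≤ b₁) (h7 : Ba - Ta ≤ b₂ ∨ Bb - Tb ≤ b₂) :
    A + B + C ≤ max b₁ 0 + max b₂ 0 + (Sca + (Ta + (Scm + (Tb + Scb)))) := by
  omega

theorem forall₂_append'  {α β : Type*} {R : α → β → Prop} {a b : List α} {cl dl : List β}
    (h1 : List.Forall₂ R a cl) (h2 : List.Forall₂ R b dl) :
    List.Forall₂ R (a ++ b) (cl ++ dl) := by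
  induction h1 with
  | nil => exact h2
  | cons h _ ih => exact .cons h ih

theorem isFrontier_pnode_inv {cs : List (PQTree U)} {l : List U}
    (h : IsFrontier (pnode cs) l) :
    ∃ cs' fs, cs'.Perm cs ∧ List.Forall₂ IsFrontier cs' fs ∧ l = fs.flatten := by
  cases h with
  | pnode cs cs' fs hp hf => exact ⟨cs', fs, hp, hf, rfl⟩

theorem forall₂_frontier_map_leaves (cs : List (PQTree U)) :
    List.Forall₂ IsFrontier cs (cs.map leaves) := by
  rw [List.forall₂_map_right_iff]
  exact List.forall₂_same.2 (fun x _ => isFrontier_leaves x)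

theorem map_sum_eq_of_forall₂ (w : U → ℤ) {cm : List (PQTree U)} {fm : List (List U)}
    (h : List.Forall₂ IsFrontier cm fm) :
    (fm.map (fun b => (b.map w).sum)).sum = (cm.map (total w)).sum := by
  induction h with
  | nil => rfl
  | cons h _ ih => simp only [List.map_cons, List.sum_cons, ih, frontier_sum w h]

theorem flatten_map_sum (w : U → ℤ) (fm : List (List U)) :
    ((fm.flatten).map w).sum = (fm.map (fun b => (b.map w).sum)).sum := by
  rw [List.map_flatten, List.sum_flatten, List.map_map]
  rfl

theorem map_mx_nonneg (w : U → ℤ) (lst : List (PQTree U)) :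
    0 ≤ (lst.map (fun t => max (total w t) 0)).sum :=
  List.sum_nonneg (by
    intro z hz
    obtain ⟨t, -, rfl⟩ := List.mem_map.1 hz
    exact le_max_right _ _)

theorem endpiece_suffix (w : U → ℤ) {t : PQTree U} (hprop : Proper t)
    (hndt : (leaves t).Nodup) :
    ∃ l₁ l₂ : List U, IsFrontier t (l₁ ++ l₂) ∧
      (l₂.map w).sum = max (border w t - max (total w t) 0) 0 + max (total w t) 0 := by
  rcases le_or_gt 0 (border w t - max (total w t) 0) with hb | hb
  · obtain ⟨S, hbc, hval⟩ := border_attained w hprop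
    obtain ⟨l₁, l₂, hf, hS⟩ := hbc.suffix
    refine ⟨l₁, l₂, hf, ?_⟩
    have hnd12 : (l₁ ++ l₂).Nodup := (perm_leaves t _ hf).nodup_iff.2 hndt
    have hnd2 : l₂.Nodup := hnd12.of_append_right
    have : (∑ u ∈ S, w u) = (l₂.map w).sum := by rw [← hS, List.sum_toFinset w hnd2]
    rw [← this, ← hval]
    omega
  · rcases le_or_gt 0 (total w t) with ht | ht
    · refine ⟨[], leaves t, by simpa using isFrontier_leaves t, ?_⟩
      have h0 : ((leaves t).map w).sum = total w t := rfl
      omega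
    · refine ⟨leaves t, [], by simpa using isFrontier_leaves t, ?_⟩
      simp only [List.map_nil, List.sum_nil]
      omega

theorem endpiece_prefix (w : U → ℤ) {t : PQTree U} (hprop : Proper t)
    (hndt : (leaves t).Nodup) :
    ∃ l₁ l₂ : List U, IsFrontier t (l₁ ++ l₂) ∧
      (l₁.map w).sum = max (border w t - max (total w t) 0) 0 + max (total w t) 0 := by
  obtain ⟨m₁, m₂, hf, hs⟩ := endpiece_suffix w hprop hndt
  refine ⟨m₂.reverse, m₁.reverse, ?_, by simpa [List.sum_reverse] using hs⟩
  have := isFrontier_reverse t _ hf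
  simpa using this

/-- **Lemma: `inner` at a p-node.** For a p-node `v` with children
`c_1, …, c_ℓ` (`ℓ ≥ 2`), write `g(c) = border(c) − max(total(c), 0)` and let `b₁ ≥ b₂` be
the two largest values among `g(c_1), …, g(c_ℓ)`, attained at two distinct children.
Then `inner(v) = max(x, y)` where `x = max_i inner(c_i)` and
`y = max(b₁, 0) + max(b₂, 0) + Σ_i max(total(c_i), 0)`. -/
theorem inner_pnode {U : Type} [DecidableEq U] (w : U → ℤ) (ℓ : ℕ) (hℓ : 2 ≤ ℓ)
    (c : Fin ℓ → PQTree U) (hp : Proper (pnode (List.ofFn c)))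
    (hnd : (leaves (pnode (List.ofFn c))).Nodup)
    (b₁ b₂ : ℤ) (hb : b₂ ≤ b₁)
    (htop : ∃ i j : Fin ℓ, i ≠ j ∧
      b₁ = border w (c i) - max (total w (c i)) 0 ∧
      b₂ = border w (c j) - max (total w (c j)) 0 ∧
      (∀ t : Fin ℓ, border w (c t) - max (total w (c t)) 0 ≤ b₁) ∧
      (∀ t : Fin ℓ, t ≠ i → border w (c t) - max (total w (c t)) 0 ≤ b₂)) :
    inner w (pnode (List.ofFn c)) =
      max
        (sSup {z : ℤ | ∃ i : Fin ℓ, z = inner w (c i)})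
        (max b₁ 0 + max b₂ 0 + ∑ i : Fin ℓ, max (total w (c i)) 0) := by
  classical
  set L := List.ofFn c with hL
  have hprop : ∀ k : Fin ℓ, Proper (c k) := by
    cases hp with
    | pnode _ _ hall => exact fun k => hall _ ((List.mem_ofFn (f := c) (a := c k)).2 ⟨k, rfl⟩)
  have hinj : Function.Injective c := injective_of_nodup_leaves c hprop hnd
  have hLnd : L.Nodup := List.nodup_ofFn.2 hinj
  have hchildnd : ∀ k : Fin ℓ, (leaves (c k)).Nodup := by
    have h1 := (List.nodup_flatten.1 (by rwa [leaves_pnode] at hnd)).1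
    exact fun k => h1 _ (List.mem_map_of_mem (f := leaves) ((List.mem_ofFn (f := c) (a := c k)).2 ⟨k, rfl⟩))
  let i0 : Fin ℓ := ⟨0, by omega⟩
  set X := sSup {z : ℤ | ∃ i : Fin ℓ, z = inner w (c i)} with hX
  have hXfin : {z : ℤ | ∃ i : Fin ℓ, z = inner w (c i)}.Finite := by
    have he : {z : ℤ | ∃ i : Fin ℓ, z = inner w (c i)} = Set.range (fun i => inner w (c i)) := by
      ext z; simp [Set.mem_range, eq_comm]
    rw [he]; exact Set.finite_range _
  have hXle : ∀ k : Fin ℓ, inner w (c k) ≤ X := fun k => le_csSup hXfin.bddAbove ⟨k, rfl⟩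
  have hX0 : 0 ≤ X := le_trans (inner_nonneg w (c i0)) (hXle i0)
  apply _root_.le_antisymm
  · -- upper bound
    apply inner_le
    intro S hS
    obtain ⟨l, l₁, l₂, l₃, hf, hl, hSdef⟩ := hS
    subst hl
    obtain ⟨cs', fs, hperm, hfor, hflat⟩ := isFrontier_pnode_inv hf
    have hlnd : (l₁ ++ l₂ ++ l₃).Nodup := (perm_leaves _ _ hf).nodup_iff.2 hnd
    have hl₂nd : l₂.Nodup := ((List.infix_append l₁ l₂ l₃).sublist).nodup hlnd
    have hsum : (∑ u ∈ S, w u) = (l₂.map w).sum := by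
      rw [← hSdef, List.sum_toFinset w hl₂nd]
    rcases flatten_eq_append₃ hflat.symm with rfl | hcase | hcase
    · rw [hsum]; simpa using le_max_of_le_left hX0
    · obtain ⟨fa, fb, x, x₁, x₂, x₃, hfs, hx, hl₂⟩ := hcase
      rw [hfs] at hfor
      obtain ⟨ca, t, cb, hcs', h1, h2, h3⟩ := forall₂_append_cons hfor
      have ht : t ∈ L := hperm.mem_iff.1
        (by rw [hcs']; exact List.mem_append_right _ List.mem_cons_self)
      obtain ⟨k, hk⟩ := (List.mem_ofFn (f := c) (a := t)).1 ht
      rw [hx] at h2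
      have hcomp : Compatible S t :=
        ⟨x₁ ++ x₂ ++ x₃, x₁, x₂, x₃, h2, rfl, by rw [← hl₂]; exact hSdef⟩
      calc (∑ u ∈ S, w u) ≤ inner w t := le_inner w hcomp
        _ = inner w (c k) := by rw [hk]
        _ ≤ X := hXle k
        _ ≤ max X _ := le_max_left _ _
    · obtain ⟨fa, fm, fb, x, y, x₁, x₂, y₁, y₂, hfs, hx, hy, rfl⟩ := hcase
      rw [hfs] at hfor
      obtain ⟨ca, ta, cb', hcs', hfo1, hfta, hfo2⟩ := forall₂_append_cons hfor
      obtain ⟨cm, tb, cb, hcb', hfom, hftb, hfo3⟩ := forall₂_append_cons hfo2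
      subst hcb'
      have hcs'nd : cs'.Nodup := hperm.nodup_iff.2 hLnd
      have hta_tb : ta ≠ tb := by
        rw [hcs'] at hcs'nd
        have h4 : (ta :: (cm ++ tb :: cb)).Nodup := hcs'nd.of_append_right
        have h5 := (List.nodup_cons.1 h4).1
        intro h
        exact h5 (by rw [h]; exact List.mem_append_right _ List.mem_cons_self)
      have hta : ta ∈ L := hperm.mem_iff.1
        (by rw [hcs']; exact List.mem_append_right _ List.mem_cons_self)
      have htb : tb ∈ L := hperm.mem_iff.1
        (by
          rw [hcs']
          exact List.mem_append_right _
            (List.mem_cons_of_mem _ (List.mem_append_right _ List.mem_cons_self)))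
      obtain ⟨ka, hka⟩ := (List.mem_ofFn (f := c) (a := ta)).1 hta
      obtain ⟨kb, hkb⟩ := (List.mem_ofFn (f := c) (a := tb)).1 htb
      subst hka; subst hkb
      rw [hx] at hfta; rw [hy] at hftb
      have hl₂nd' : (x₂ ++ (fm.flatten ++ y₁)).Nodup := by
        rwa [← List.append_assoc]
      have hx₂nd : x₂.Nodup := List.Nodup.sublist (List.sublist_append_left _ _) hl₂nd'
      have hy₁nd : y₁.Nodup := ((List.suffix_append _ y₁).sublist).nodup hl₂nd
      have hA : (x₂.map w).sum ≤ max (border w (c ka)) 0 := suffix_sum_le w hfta hx₂nd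
      have hC : (y₁.map w).sum ≤ max (border w (c kb)) 0 := prefix_sum_le w hftb hy₁nd
      have hB : ((fm.flatten).map w).sum = (cm.map (total w)).sum := by
        rw [flatten_map_sum, map_sum_eq_of_forall₂ w hfom]
      have hBle : (cm.map (total w)).sum ≤ (cm.map (fun t => max (total w t) 0)).sum :=
        List.sum_le_sum (fun t _ => le_max_left _ _)
      have htotsum : (cs'.map (fun t => max (total w t) 0)).sum
          = ∑ k : Fin ℓ, max (total w (c k)) 0 := by
        rw [(hperm.map (fun t => max (total w t) 0)).sum_eq, hL, List.map_ofFn, List.sum_ofFn]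
        rfl
      have hsplit : (cs'.map (fun t => max (total w t) 0)).sum =
          (ca.map (fun t => max (total w t) 0)).sum + (max (total w (c ka)) 0 +
            ((cm.map (fun t => max (total w t) 0)).sum + (max (total w (c kb)) 0 +
              (cb.map (fun t => max (total w t) 0)).sum))) := by
        rw [hcs']; simp [List.sum_append]
      have hca0 : 0 ≤ (ca.map (fun t => max (total w t) 0)).sum := map_mx_nonneg w ca
      have hcb0 : 0 ≤ (cb.map (fun t => max (total w t) 0)).sum := map_mx_nonneg w cb
      have hkane : ka ≠ kb := fun h => hta_tb (by rw [h])
      obtain ⟨i, j, hij, hb1, hb2, hub1, hub2⟩ := htop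
      have hga1 : border w (c ka) - max (total w (c ka)) 0 ≤ b₁ := hub1 ka
      have hgb1 : border w (c kb) - max (total w (c kb)) 0 ≤ b₁ := hub1 kb
      have hone : border w (c ka) - max (total w (c ka)) 0 ≤ b₂ ∨
          border w (c kb) - max (total w (c kb)) 0 ≤ b₂ := by
        rcases eq_or_ne ka i with rfl | hne
        · exact Or.inr (hub2 kb (fun h => hkane h.symm))
        · exact Or.inl (hub2 ka hne)
      have hsum2 : ((x₂ ++ fm.flatten ++ y₁).map w).sum =
          (x₂.map w).sum + ((fm.flatten).map w).sum + (y₁.map w).sum := by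
        rw [List.map_append, List.map_append, List.sum_append, List.sum_append]
      have hBB : ((fm.flatten).map w).sum ≤ (cm.map (fun t => max (total w t) 0)).sum := by
        rw [hB]; exact hBle
      rw [hsum, hsum2]
      refine le_trans ?_ (le_max_right X _)
      rw [← htotsum, hsplit]
      exact arith_bound hb hA hC hBB hca0 hcb0 (le_max_right _ _) (le_max_right _ _)
        hga1 hgb1 hone
  · -- lower bound
    apply max_le
    · apply csSup_le (Set.nonempty_of_mem (show inner w (c i0) ∈ {z : ℤ | ∃ i : Fin ℓ, z = inner w (c i)} from ⟨i0, rfl⟩))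
      rintro z ⟨k, rfl⟩
      obtain ⟨S, hS, hval⟩ := inner_attained w (c k)
      rw [hval]
      apply le_inner
      obtain ⟨l, l₁, l₂, l₃, hfk, hl, hSdef⟩ := hS
      subst hl
      set K := (List.finRange ℓ).erase k with hK
      have hpermK : List.finRange ℓ ~ k :: K := List.perm_cons_erase (List.mem_finRange k)
      set B := ((K.map c).map leaves).flatten with hB
      have hfront : IsFrontier (pnode L) ((l₁ ++ l₂ ++ l₃) ++ B) := by
        have hcs' : (c k :: K.map c).Perm L := by
          rw [hL, List.ofFn_eq_map]
          have := (hpermK.map c).symm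
          simpa using this
        have hforall : List.Forall₂ IsFrontier (c k :: K.map c)
            ((l₁ ++ l₂ ++ l₃) :: (K.map c).map leaves) :=
          .cons hfk (forall₂_frontier_map_leaves _)
        have := IsFrontier.pnode L (c k :: K.map c) _ hcs' hforall
        simpa [hB] using this
      exact ⟨_, l₁, l₂, l₃ ++ B, hfront, by simp, hSdef⟩
    · obtain ⟨i, j, hij, hb1, hb2, hub1, hub2⟩ := htop
      obtain ⟨li₁, li₂, hfi, hsumi⟩ := endpiece_suffix w (hprop i) (hchildnd i)
      obtain ⟨lj₁, lj₂, hfj, hsumj⟩ := endpiece_prefix w (hprop j) (hchildnd j)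
      set K := ((List.finRange ℓ).erase i).erase j with hK
      have hjmem : j ∈ (List.finRange ℓ).erase i :=
        (List.mem_erase_of_ne (fun h => hij h.symm)).2 (List.mem_finRange j)
      have hperm1 : List.finRange ℓ ~ i :: j :: K :=
        (List.perm_cons_erase (List.mem_finRange i)).trans
          ((List.perm_cons_erase hjmem).cons i)
      set p : Fin ℓ → Bool := fun k => decide (0 ≤ total w (c k)) with hpdef
      set Kp := K.filter p with hKp
      set Kn := K.filter (fun k => !p k) with hKn
      have hpermK : Kp ++ Kn ~ K := List.filter_append_perm p K
      set cs' := c i :: (Kp.map c ++ (c j :: Kn.map c)) with hcs'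
      have hpermcs : cs'.Perm L := by
        rw [hL, List.ofFn_eq_map]
        calc cs' ~ c i :: (c j :: (Kp.map c ++ Kn.map c)) := (List.perm_middle).cons (c i)
          _ ~ c i :: c j :: K.map c := by
              refine Perm.cons _ (Perm.cons _ ?_)
              rw [← List.map_append]; exact hpermK.map c
          _ ~ List.map c (List.finRange ℓ) := by
              have := (hperm1.map c).symm
              simpa using this
      set fs := (li₁ ++ li₂) ::
        ((Kp.map c).map leaves ++ ((lj₁ ++ lj₂) :: (Kn.map c).map leaves)) with hfs
      have hforall : List.Forall₂ IsFrontier cs' fs :=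
        .cons hfi (forall₂_append' (forall₂_frontier_map_leaves _)
          (.cons hfj (forall₂_frontier_map_leaves _)))
      have hfront : IsFrontier (pnode L) fs.flatten := .pnode L cs' fs hpermcs hforall
      set Bp := ((Kp.map c).map leaves).flatten with hBp
      set Bn := ((Kn.map c).map leaves).flatten with hBn
      have hEQ : fs.flatten = li₁ ++ (li₂ ++ Bp ++ lj₁) ++ (lj₂ ++ Bn) := by
        simp [hfs, hBp, hBn]
      have hcomp : Compatible (li₂ ++ Bp ++ lj₁).toFinset (pnode L) :=
        ⟨fs.flatten, li₁, li₂ ++ Bp ++ lj₁, lj₂ ++ Bn, hfront, hEQ, rfl⟩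
      have hle := le_inner w hcomp
      have hflnd : fs.flatten.Nodup := (perm_leaves _ _ hfront).nodup_iff.2 hnd
      have hl₂nd : (li₂ ++ Bp ++ lj₁).Nodup := by
        rw [hEQ] at hflnd
        exact ((List.infix_append _ _ _).sublist).nodup hflnd
      have hsumS : (∑ u ∈ (li₂ ++ Bp ++ lj₁).toFinset, w u) = ((li₂ ++ Bp ++ lj₁).map w).sum :=
        List.sum_toFinset w hl₂nd
      have hsum2 : ((li₂ ++ Bp ++ lj₁).map w).sum =
          (li₂.map w).sum + (Bp.map w).sum + (lj₁.map w).sum := by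
        rw [List.map_append, List.map_append, List.sum_append, List.sum_append]
      have hBpsum : (Bp.map w).sum = (Kp.map (fun k => total w (c k))).sum := by
        rw [hBp, flatten_map_sum, List.map_map, List.map_map]
        rfl
      have hsumfin : (∑ k : Fin ℓ, max (total w (c k)) 0) =
          max (total w (c i)) 0 + max (total w (c j)) 0 +
            (K.map (fun k => max (total w (c k)) 0)).sum := by
        rw [← List.sum_ofFn (f := fun k : Fin ℓ => max (total w (c k)) 0), List.ofFn_eq_map,
          (hperm1.map (fun k : Fin ℓ => max (total w (c k)) 0)).sum_eq]
        simp [add_assoc]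
      have hKppos : (Kp.map (fun k => max (total w (c k)) 0)).sum =
          (Kp.map (fun k => total w (c k))).sum := by
        apply congrArg List.sum
        apply List.map_congr_left
        intro a ha
        have := (List.mem_filter.1 ha).2
        rw [hpdef] at this
        have h0 : 0 ≤ total w (c a) := of_decide_eq_true this
        exact max_eq_left h0
      have hKnzero : (Kn.map (fun k => max (total w (c k)) 0)).sum = 0 := by
        rw [List.map_congr_left (g := fun _ => (0:ℤ)) ?_]
        · simp
        · intro a ha
          have := (List.mem_filter.1 ha).2
          rw [hpdef] at this
          simp only [Bool.not_eq_true', decide_eq_false_iff_not, not_le] at this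
          exact max_eq_right this.le
      have hKsum : (K.map (fun k => max (total w (c k)) 0)).sum =
          (Kp.map (fun k => total w (c k))).sum := by
        rw [← (hpermK.map (fun k => max (total w (c k)) 0)).sum_eq]
        rw [List.map_append, List.sum_append, hKppos, hKnzero, add_zero]
      rw [hsumS, hsum2] at hle
      rw [← hb1] at hsumi
      rw [← hb2] at hsumj
      omega

end PQTree
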